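/- Let m ∈ {0,…,N−1}, k ∈ {0,…,C−1}, and let τ = k₀·Δt for some integer k₀, with k·T_SC ≤ τ < k·T_SC + min{T_SC − t_{m,1}, t_{m,1}}, and set ν = 2·c̃₁·τ − k/Δt. Then for every i ∈ {0,…,C−k−1} and every t ∈ [t_{m,i} + τ, t_{m,i+k+1}), as well as for every t ∈ [t_{m,C−k} + τ, T), the ambiguity-function integrand is the constant φ_m(t)·conj(φ_m(t−τ))·exp(−2πiνt) = exp(2πi·((m/T)·τ − c̃₁·τ²)), independent of t and i; hence the contributions of all frequency-aligned sub-intervals add coherently, producing a pulse of the auto-ambiguity function at the point (τ, 2·c̃₁·τ − k/Δt). -/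

import Mathlib

open MeasureTheory Complex Real

noncomputable section

namespace AFDM

variable (N C : ℕ) (Δt : ℝ)

/-- Frame duration `T = N·Δt`. -/
def T : ℝ := N * Δt

/-- Chirp rate parameter `c̃₁ = C/(2·T·Δt)`. -/
def ctil : ℝ := C / (2 * T N Δt * Δt)

/-- Subchirp duration `T_SC = T/C`. -/
def TSC : ℝ := T N Δt / C

/-- Spectrum wrapping points `t_{m,q}`: `t_{m,0} = 0`, `t_{m,q} = q·T/C − m·Δt/C` for
`q = 1,…,C`, and `t_{m,C+1} = T`. -/
def tp (m q : ℕ) : ℝ :=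
  if q = 0 then 0 else if q ≤ C then q * T N Δt / C - m * Δt / C else T N Δt

/-- Wrapping index function `q_m(t)`: equals `q` on `[t_{m,q}, t_{m,q+1})` for `t ∈ [0,T)`. -/
def qm (m : ℕ) (t : ℝ) : ℤ :=
  (((Finset.range (C + 1)).filter (fun q => tp N C Δt m q ≤ t)).card : ℤ) - 1

/-- The `m`-th continuous-time AFDM chirp subcarrier with parameter `c₂`:
`φ_m(t) = exp(2πi(c₂·m² + c̃₁·t² + (m/T)·t − q_m(t)·t/Δt))` on `[0,T)`, `0` otherwise. -/
def phi (c₂ : ℝ) (m : ℕ) (t : ℝ) : ℂ :=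
  if 0 ≤ t ∧ t < T N Δt then
    Complex.exp (2 * Real.pi * Complex.I *
      ((c₂ * (m : ℝ) ^ 2 + ctil N C Δt * t ^ 2 + ((m : ℝ) / T N Δt) * t
        - (qm N C Δt m t : ℝ) * t / Δt : ℝ) : ℂ))
  else 0

/-- The aperiodic ambiguity function `A_{a,b}(τ,ν) = ∫ a(t)·conj(b(t−τ))·exp(−2πiνt) dt`. -/
def AF (a b : ℝ → ℂ) (τ ν : ℝ) : ℂ :=
  ∫ t : ℝ, a t * (starRingEnd ℂ) (b (t - τ)) *
    Complex.exp (-(2 * Real.pi * Complex.I * ((ν * t : ℝ) : ℂ)))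

/-- The integral indicator `I(c, t₁, t₂)`. -/
def Iind (c t₁ t₂ : ℝ) : ℂ :=
  if c ≠ 0 then
    (Complex.exp (2 * Real.pi * Complex.I * ((c * t₂ : ℝ) : ℂ))
      - Complex.exp (2 * Real.pi * Complex.I * ((c * t₁ : ℝ) : ℂ))) /
      (2 * Real.pi * Complex.I * ((c : ℝ) : ℂ))
  else ((t₂ - t₁ : ℝ) : ℂ)


section Helpers

variable {N C : ℕ} {Δt : ℝ} {m : ℕ}

lemma tp_zero : tp N C Δt m 0 = 0 := by simp [tp]

lemma tp_of {q : ℕ} (h1 : 1 ≤ q) (h2 : q ≤ C) :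
    tp N C Δt m q = q * T N Δt / C - m * Δt / C := by
  unfold tp
  rw [if_neg (by omega), if_pos h2]

lemma tp_last {q : ℕ} (h2 : C < q) : tp N C Δt m q = T N Δt := by
  unfold tp
  rw [if_neg (by omega), if_neg (by omega)]

lemma T_pos (hN : 0 < N) (hΔt : 0 < Δt) : 0 < T N Δt := by
  have : (0:ℝ) < N := by exact_mod_cast hN
  unfold T; positivity

lemma tp_nonneg (hN : 0 < N) (hC : 0 < C) (hΔt : 0 < Δt) (hm : m < N) (q : ℕ) :
    0 ≤ tp N C Δt m q := by
  have hC' : (0:ℝ) < C := by exact_mod_cast hC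
  have hT : (0:ℝ) < T N Δt := T_pos hN hΔt
  rcases Nat.eq_zero_or_pos q with h | h
  · simp [h, tp_zero]
  rcases le_or_gt q C with h2 | h2
  · rw [tp_of h h2, sub_nonneg, div_le_div_iff_of_pos_right hC']
    have hq1 : (1:ℝ) ≤ q := by exact_mod_cast h
    have hmN : (m:ℝ) + 1 ≤ N := by exact_mod_cast hm
    have e1 : (m:ℝ) * Δt ≤ (N:ℝ) * Δt := by nlinarith
    have hNΔ : (0:ℝ) < (N:ℝ) * Δt := by
      have : (0:ℝ) < N := by exact_mod_cast hN
      positivity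
    have e2 : (N:ℝ) * Δt ≤ (q:ℝ) * ((N:ℝ) * Δt) := le_mul_of_one_le_left hNΔ.le hq1
    unfold T at *
    nlinarith
  · rw [tp_last h2]; exact hT.le

lemma tp_step (hN : 0 < N) (hC : 0 < C) (hΔt : 0 < Δt) (hm : m < N) {q : ℕ} (hq : q ≤ C) :
    tp N C Δt m q ≤ tp N C Δt m (q + 1) := by
  have hC' : (0:ℝ) < C := by exact_mod_cast hC
  have hT : (0:ℝ) < T N Δt := T_pos hN hΔt
  rcases Nat.eq_zero_or_pos q with h | h
  · subst h; rw [tp_zero]; exact tp_nonneg hN hC hΔt hm 1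
  rcases lt_or_eq_of_le hq with h2 | h2
  · rw [tp_of h hq, tp_of (by omega) (by omega)]
    have key : (q:ℝ) * T N Δt / C ≤ ((q:ℕ)+1 : ℝ) * T N Δt / C := by
      rw [div_le_div_iff_of_pos_right hC']
      nlinarith
    push_cast at key ⊢
    linarith
  · subst h2
    rw [tp_of h le_rfl, tp_last (by omega)]
    have h1 : (q:ℝ) * T N Δt / q = T N Δt := by
      field_simp
    rw [h1]
    have : 0 ≤ (m:ℝ) * Δt / q := by positivity
    linarith

lemma tp_mono (hN : 0 < N) (hC : 0 < C) (hΔt : 0 < Δt) (hm : m < N) :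
    ∀ b ≤ C + 1, ∀ a ≤ b, tp N C Δt m a ≤ tp N C Δt m b := by
  intro b
  induction b with
  | zero =>
    intro _ a ha
    have : a = 0 := Nat.le_zero.mp ha
    subst this; exact le_rfl
  | succ n ih =>
    intro hb a ha
    rcases Nat.eq_or_lt_of_le ha with h | h
    · subst h; exact le_rfl
    · exact le_trans (ih (by omega) a (by omega)) (tp_step hN hC hΔt hm (by omega))

lemma qm_eq (hN : 0 < N) (hC : 0 < C) (hΔt : 0 < Δt) (hm : m < N) {j : ℕ} (hj : j ≤ C)
    {t : ℝ} (h1 : tp N C Δt m j ≤ t) (h2 : t < tp N C Δt m (j + 1)) :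
    qm N C Δt m t = (j : ℤ) := by
  unfold qm
  have : (Finset.range (C + 1)).filter (fun q => tp N C Δt m q ≤ t) = Finset.range (j + 1) := by
    ext q
    simp only [Finset.mem_filter, Finset.mem_range]
    constructor
    · rintro ⟨hq, hle⟩
      by_contra hcon
      push_neg at hcon
      have : tp N C Δt m (j + 1) ≤ tp N C Δt m q :=
        tp_mono hN hC hΔt hm q (by omega) (j + 1) hcon
      linarith
    · intro hq
      exact ⟨by omega, le_trans (tp_mono hN hC hΔt hm j (by omega) q (by omega)) h1⟩
  rw [this, Finset.card_range]
  push_cast; ring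

lemma exp_mul_conj_exp (x y z w : ℝ) (n : ℤ) (h : x - y - z = w + n) :
    Complex.exp (2 * Real.pi * Complex.I * (x : ℂ)) *
      (starRingEnd ℂ) (Complex.exp (2 * Real.pi * Complex.I * (y : ℂ))) *
      Complex.exp (-(2 * Real.pi * Complex.I * (z : ℂ))) =
    Complex.exp (2 * Real.pi * Complex.I * (w : ℂ)) := by
  have hconj : (starRingEnd ℂ) (Complex.exp (2 * Real.pi * Complex.I * (y : ℂ))) =
      Complex.exp (-(2 * Real.pi * Complex.I * (y : ℂ))) := by
    rw [← Complex.exp_conj]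
    congr 1
    simp only [map_mul, map_ofNat, Complex.conj_I, Complex.conj_ofReal]
    ring
  rw [hconj, ← Complex.exp_add, ← Complex.exp_add]
  have hc : (x : ℂ) - (y : ℂ) - (z : ℂ) = (w : ℂ) + (n : ℂ) := by exact_mod_cast h
  rw [show (2 * (Real.pi:ℂ) * Complex.I * (x:ℂ) + -(2 * (Real.pi:ℂ) * Complex.I * (y:ℂ)) +
      -(2 * (Real.pi:ℂ) * Complex.I * (z:ℂ))) =
      2 * (Real.pi:ℂ) * Complex.I * (w:ℂ) + (n:ℂ) * (2 * (Real.pi:ℂ) * Complex.I) from by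
    linear_combination (2 * (Real.pi:ℂ) * Complex.I) * hc]
  rw [Complex.exp_add, Complex.exp_int_mul_two_pi_mul_I, mul_one]


lemma TSC_eq : TSC N C Δt = (N:ℝ) * (Δt / C) := by
  unfold TSC T; rw [mul_div_assoc]

lemma T_eq (hC : 0 < C) : T N Δt = (C:ℝ) * ((N:ℝ) * (Δt / C)) := by
  have hC' : (C:ℝ) ≠ 0 := by positivity
  unfold T; field_simp

lemma tp_eq {q : ℕ} (h1 : 1 ≤ q) (h2 : q ≤ C) (hC : 0 < C) :
    tp N C Δt m q = ((q:ℝ) * N - m) * (Δt / C) := by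
  have hC' : (C:ℝ) ≠ 0 := by positivity
  rw [tp_of h1 h2]; unfold T; field_simp

lemma integrand_const (hN : 0 < N) (hC : 0 < C) (hΔt : 0 < Δt) (c₂ : ℝ) (hm : m < N)
    (k : ℕ) (k₀ : ℤ) (τ ν : ℝ) (hτ : τ = (k₀:ℝ) * Δt)
    (hν : ν = 2 * ctil N C Δt * τ - (k:ℝ) / Δt)
    (t : ℝ) (ht0 : 0 ≤ t) (htT : t < T N Δt) (ht0' : 0 ≤ t - τ) (htT' : t - τ < T N Δt)
    (hq : (qm N C Δt m t : ℝ) = (qm N C Δt m (t - τ) : ℝ) + (k:ℝ)) :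
    phi N C Δt c₂ m t * (starRingEnd ℂ) (phi N C Δt c₂ m (t - τ)) *
        Complex.exp (-(2 * Real.pi * Complex.I * ((ν * t : ℝ) : ℂ))) =
      Complex.exp (2 * Real.pi * Complex.I *
        ((((m : ℝ) / T N Δt) * τ - ctil N C Δt * τ ^ 2 : ℝ) : ℂ)) := by
  have hΔ : Δt ≠ 0 := hΔt.ne'
  unfold phi
  rw [if_pos ⟨ht0, htT⟩, if_pos ⟨ht0', htT'⟩]
  apply exp_mul_conj_exp _ _ _ _ (-(qm N C Δt m (t - τ) * k₀))
  rw [hq, hν, hτ]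
  push_cast
  field_simp
  ring

end Helpers

/-- Coherent accumulation on frequency-aligned sub-intervals: when `τ = k₀·Δt` lies in the
`k`-th subchirp window and `ν = 2·c̃₁·τ − k/Δt`, the ambiguity-function integrand is the
constant `exp(2πi·((m/T)·τ − c̃₁·τ²))` on every frequency-aligned sub-interval, hence all
such contributions add coherently, producing a pulse of the auto-ambiguity function at
`(τ, 2·c̃₁·τ − k/Δt)`. -/

theorem aligned_integrand_constant
    (N C : ℕ) (hN : 0 < N) (hNeven : Even N) (hC : 0 < C)
    (Δt : ℝ) (hΔt : 0 < Δt) (c₂ : ℝ) (m k : ℕ) (hm : m < N) (hk : k < C)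
    (k₀ : ℤ) (τ : ℝ) (hτ : τ = (k₀ : ℝ) * Δt)
    (hτ1 : (k : ℝ) * TSC N C Δt ≤ τ)
    (hτ2 : τ < (k : ℝ) * TSC N C Δt + min (TSC N C Δt - tp N C Δt m 1) (tp N C Δt m 1))
    (ν : ℝ) (hν : ν = 2 * ctil N C Δt * τ - (k : ℝ) / Δt) :
    (∀ i : ℕ, i ≤ C - k - 1 → ∀ t : ℝ,
        tp N C Δt m i + τ ≤ t → t < tp N C Δt m (i + k + 1) →
        phi N C Δt c₂ m t * (starRingEnd ℂ) (phi N C Δt c₂ m (t - τ)) *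
            Complex.exp (-(2 * Real.pi * Complex.I * ((ν * t : ℝ) : ℂ))) =
          Complex.exp (2 * Real.pi * Complex.I *
            ((((m : ℝ) / T N Δt) * τ - ctil N C Δt * τ ^ 2 : ℝ) : ℂ))) ∧
      (∀ t : ℝ, tp N C Δt m (C - k) + τ ≤ t → t < T N Δt →
        phi N C Δt c₂ m t * (starRingEnd ℂ) (phi N C Δt c₂ m (t - τ)) *
            Complex.exp (-(2 * Real.pi * Complex.I * ((ν * t : ℝ) : ℂ))) =
          Complex.exp (2 * Real.pi * Complex.I *
            ((((m : ℝ) / T N Δt) * τ - ctil N C Δt * τ ^ 2 : ℝ) : ℂ))) := by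
  have hC' : (0:ℝ) < C := by exact_mod_cast hC
  have hd : (0:ℝ) < Δt / C := by positivity
  have hT : 0 < T N Δt := T_pos hN hΔt
  have hTSC : 0 < TSC N C Δt := by unfold TSC; positivity
  have hmN : (m:ℝ) ≤ N := by exact_mod_cast hm.le
  have hτ0 : 0 ≤ τ := le_trans (by positivity) hτ1
  have hkτ : (k:ℝ) * ((N:ℝ) * (Δt / C)) ≤ τ := by rw [← TSC_eq]; exact hτ1
  have htopT : tp N C Δt m (C + 1) = T N Δt := tp_last (by omega)
  constructor
  · intro i hi t ht1 ht2
    have hik : i + k + 1 ≤ C := by omega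
    -- tp (i+k) ≤ tp i + k·TSC
    have hA : tp N C Δt m (i + k) ≤ tp N C Δt m i + (k:ℝ) * ((N:ℝ) * (Δt / C)) := by
      rcases Nat.eq_zero_or_pos i with hi0 | hi0
      · subst hi0
        rcases Nat.eq_zero_or_pos k with hk0 | hk0
        · subst hk0; simp [tp_zero]
        · rw [tp_zero, tp_eq (by omega) (by omega) hC, zero_add]
          push_cast
          nlinarith [hd, hmN]
      · rw [tp_eq (by omega) (by omega) hC, tp_eq hi0 (by omega) hC]
        push_cast; ring_nf; nlinarith [hd]
    -- tp (i+k+1) = tp (i+1) + k·TSC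
    have hB : tp N C Δt m (i + k + 1) = tp N C Δt m (i + 1) + (k:ℝ) * ((N:ℝ) * (Δt / C)) := by
      rw [tp_eq (by omega) (by omega) hC, tp_eq (by omega) (by omega) hC]
      push_cast; ring
    have h0i : 0 ≤ tp N C Δt m i := tp_nonneg hN hC hΔt hm i
    have ht0 : 0 ≤ t := by linarith
    have htT : t < T N Δt := lt_of_lt_of_le ht2
      (htopT ▸ tp_mono hN hC hΔt hm (C + 1) le_rfl (i + k + 1) (by omega))
    have hq1 : qm N C Δt m t = ((i + k : ℕ) : ℤ) :=
      qm_eq hN hC hΔt hm (by omega) (by linarith) ht2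
    have hq2 : qm N C Δt m (t - τ) = (i : ℤ) :=
      qm_eq hN hC hΔt hm (by omega) (by linarith) (by linarith)
    exact integrand_const hN hC hΔt c₂ hm k k₀ τ ν hτ hν t ht0 htT (by linarith) (by linarith)
      (by rw [hq1, hq2]; push_cast; ring)
  · intro t ht1 ht2
    -- tp C ≤ tp (C-k) + k·TSC
    have hA : tp N C Δt m C ≤ tp N C Δt m (C - k) + (k:ℝ) * ((N:ℝ) * (Δt / C)) := by
      rcases Nat.eq_zero_or_pos k with hk0 | hk0
      · subst hk0; simp
      · rw [tp_eq (by omega) le_rfl hC, tp_eq (by omega : 1 ≤ C - k) (by omega) hC]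
        push_cast [Nat.cast_sub hk.le]; ring_nf; nlinarith [hd]
    have h0i : 0 ≤ tp N C Δt m (C - k) := tp_nonneg hN hC hΔt hm (C - k)
    have ht0 : 0 ≤ t := by linarith
    -- t - τ < tp (C-k+1)
    have hB : t - τ < tp N C Δt m (C - k + 1) := by
      rcases Nat.eq_zero_or_pos k with hk0 | hk0
      · subst hk0
        rw [show C - 0 + 1 = C + 1 from by omega, htopT]
        linarith
      · rw [tp_eq (by omega) (by omega : C - k + 1 ≤ C) hC]
        have hTe : T N Δt = (C:ℝ) * ((N:ℝ) * (Δt / C)) := T_eq hC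
        push_cast [Nat.cast_sub hk.le]
        have e1 : ((C:ℝ) - k) * ((N:ℝ) * (Δt / C)) =
            (C:ℝ) * ((N:ℝ) * (Δt / C)) - (k:ℝ) * ((N:ℝ) * (Δt / C)) := by ring
        have e2 : (((C:ℝ) - k + 1) * N - m) * (Δt / C) -
            ((C:ℝ) - k) * ((N:ℝ) * (Δt / C)) = ((N:ℝ) - m) * (Δt / C) := by ring
        have e3 : 0 ≤ ((N:ℝ) - m) * (Δt / C) := mul_nonneg (by linarith) hd.le
        linarith
    have hq1 : qm N C Δt m t = ((C : ℕ) : ℤ) :=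
      qm_eq hN hC hΔt hm le_rfl (by linarith) (by rw [htopT]; exact ht2)
    have hq2 : qm N C Δt m (t - τ) = ((C - k : ℕ) : ℤ) :=
      qm_eq hN hC hΔt hm (by omega) (by linarith) hB
    exact integrand_const hN hC hΔt c₂ hm k k₀ τ ν hτ hν t ht0 ht2 (by linarith) (by linarith)
      (by rw [hq1, hq2]; push_cast [Nat.cast_sub hk.le]; ring)


end AFDM
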